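/- Conversely to the constant expectation property, if M is an adapted, integrable, right-continuous process such that E[M_S] = E[M_T] for every pair of bounded stopping times S ≤ T, then M is a martingale. -/

import Mathlib

open MeasureTheory
open scoped NNReal

theorem martingale_of_stopping_time_expectation
    {Ω : Type*} {m : MeasurableSpace Ω} {μ : Measure Ω} [IsProbabilityMeasure μ]
    (ℱ : Filtration ℝ≥0 m) (M : ℝ≥0 → Ω → ℝ)
    (hadapted : Adapted ℱ M) (hint : ∀ t, Integrable (M t) μ)
    (hrc : ∀ ω, ∀ t : ℝ≥0, ContinuousWithinAt (fun u => M u ω) (Set.Ici t) t)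
    (h : ∀ S T : Ω → ℝ≥0, IsStoppingTime ℱ (fun ω => (S ω : WithTop ℝ≥0)) →
        IsStoppingTime ℱ (fun ω => (T ω : WithTop ℝ≥0)) →
        (∀ ω, S ω ≤ T ω) → (∃ C : ℝ≥0, ∀ ω, T ω ≤ C) →
        (∫ ω, M (S ω) ω ∂μ) = ∫ ω, M (T ω) ω ∂μ) :
    Martingale M ℱ μ := by
  classical
  have key : ∀ i j : ℝ≥0, i ≤ j → ∀ A : Set Ω, MeasurableSet[ℱ i] A →
      ∫ ω in A, M i ω ∂μ = ∫ ω in A, M j ω ∂μ := by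
    intro i j hij A hA
    have hAm : MeasurableSet A := ℱ.le i A hA
    set S : Ω → ℝ≥0 := A.piecewise (fun _ => i) (fun _ => j) with hS
    have hSst : IsStoppingTime ℱ (fun ω => (S ω : WithTop ℝ≥0)) := by
      convert isStoppingTime_piecewise_const hij hA using 1
      funext ω
      by_cases hw : ω ∈ A <;> simp [hS, Set.piecewise, hw] <;> rfl
    have hTst : IsStoppingTime ℱ (fun _ => ((j : ℝ≥0) : WithTop ℝ≥0)) := isStoppingTime_const ℱ j
    have hST : ∀ ω, S ω ≤ (fun _ : Ω => j) ω := by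
      intro ω
      by_cases hw : ω ∈ A <;> simp [hS, Set.piecewise, hw, hij]
    have heq := h S (fun _ => j) hSst hTst hST ⟨j, fun _ => le_rfl⟩
    have hSv : (fun ω => M (S ω) ω) = A.piecewise (M i) (M j) := by
      funext ω
      by_cases hw : ω ∈ A <;> simp [hS, Set.piecewise, hw]
    rw [hSv] at heq
    rw [integral_piecewise hAm (hint i).integrableOn (hint j).integrableOn] at heq
    have hjsplit : ∫ ω, M j ω ∂μ = ∫ ω in A, M j ω ∂μ + ∫ ω in Aᶜ, M j ω ∂μ :=
      (integral_add_compl hAm (hint j)).symm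
    have := heq.trans hjsplit
    linarith
  rw [martingale_iff]
  constructor
  · have : Submartingale (-M) ℱ μ := by
      refine submartingale_of_setIntegral_le hadapted.neg.stronglyAdapted (fun i => (hint i).neg) ?_
      intro i j hij A hA
      simp only [Pi.neg_apply, integral_neg, neg_le_neg_iff]
      exact (key i j hij A hA).ge
    simpa using this.neg
  · refine submartingale_of_setIntegral_le hadapted.stronglyAdapted hint ?_
    intro i j hij A hA
    exact (key i j hij A hA).le
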